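/- Under the stated assumptions, for every α ∈ ℂ the scalar product admits the generalized Izergin determinant representation S(PQ,α) = det_{1≤i,k≤N} [ 1/sinh(ξ_i − p_k) + α·f̃(ξ_i)/sinh(ξ_i − p_k − η) ] / det_{1≤i,k≤N} [ 1/sinh(ξ_i − p_k) ]. -/

import Mathlib

open Complex Finset

noncomputable section

def Vand {m : ℕ} (x : Fin m → ℂ) : ℂ :=
  ∏ i : Fin m, ∏ j ∈ Finset.Ioi i, Complex.sinh (x j - x i)

def trigPoly {N : ℕ} (r : Fin N → ℂ) (l : ℂ) : ℂ := ∏ j, Complex.sinh ((l - r j) / 2)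
def iπ : ℂ := (Real.pi : ℂ) * Complex.I

/-- the scalar product `S(PQ,α)` of two separate states -/
def SP {N : ℕ} (η : ℂ) (ξ : Fin N → ℂ) (P Q : ℂ → ℂ) (α : ℂ) : ℂ :=
  ∑ h : Fin N → Fin 2,
    (∏ n, (α * P (ξ n) * Q (ξ n) / (P (ξ n - η) * Q (ξ n - η))) ^ (1 - (h n : ℕ))) *
      Vand (fun n => ξ n - ((1 - (h n : ℕ) : ℕ) : ℂ) * η) / Vand ξ

lemma offdiag_prod {N : ℕ} (f : Fin N → Fin N → ℂ) :
    (∏ k, ∏ l ∈ Finset.univ.erase k, f k l)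
      = ∏ i, ∏ j ∈ Finset.Ioi i, (f i j * f j i) := by
  have h1 : ∀ k : Fin N, Finset.univ.erase k = Finset.Ioi k ∪ Finset.Iio k := by
    intro k; ext l
    simp only [Finset.mem_erase, Finset.mem_univ, and_true, Finset.mem_union, Finset.mem_Ioi,
      Finset.mem_Iio]
    constructor
    · intro hne; rcases lt_or_gt_of_ne (Ne.symm hne) with h | h
      · exact Or.inl h
      · exact Or.inr h
    · rintro (h | h) <;> intro he <;> subst he <;> exact lt_irrefl _ h
  have h2 : (∏ k, ∏ l ∈ Finset.Iio k, f k l) = ∏ i, ∏ j ∈ Finset.Ioi i, f j i := by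
    refine Finset.prod_comm' ?_
    intro x y
    simp [Finset.mem_Iio, Finset.mem_Ioi]
  calc (∏ k, ∏ l ∈ Finset.univ.erase k, f k l)
      = ∏ k, ((∏ l ∈ Finset.Ioi k, f k l) * ∏ l ∈ Finset.Iio k, f k l) := by
        refine Finset.prod_congr rfl fun k _ => ?_
        rw [h1 k, Finset.prod_union]
        simp [Finset.disjoint_left]
        omega
    _ = (∏ k, ∏ l ∈ Finset.Ioi k, f k l) * ∏ k, ∏ l ∈ Finset.Iio k, f k l := by
        rw [Finset.prod_mul_distrib]
    _ = _ := by rw [h2, ← Finset.prod_mul_distrib]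
                exact Finset.prod_congr rfl fun i _ => (Finset.prod_mul_distrib).symm

lemma sinh_ne_zero_of {z : ℂ} (h : ∀ m : ℤ, z ≠ (m : ℂ) * iπ) : Complex.sinh z ≠ 0 := by
  intro h0
  have : Complex.exp z = Complex.exp (-z) := by
    have := h0
    unfold Complex.sinh at this
    field_simp at this
    linear_combination this
  rw [Complex.exp_eq_exp_iff_exists_int] at this
  obtain ⟨n, hn⟩ := this
  apply h n
  have : (2:ℂ) * z = 2 * (n * iπ) := by
    unfold iπ; linear_combination hn
  linear_combination this / 2

lemma detA {N : ℕ} (u v : Fin N → ℂ) (hv : Function.Injective v) :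
    Matrix.det (Matrix.of fun i k : Fin N => ∏ l ∈ Finset.univ.erase k, (u i - v l))
      = (∏ i, ∏ j ∈ Finset.Ioi i, (u j - u i)) * ∏ i, ∏ j ∈ Finset.Ioi i, (v i - v j) := by
  classical
  set g : Fin N → Polynomial ℂ :=
    fun k => ∏ l ∈ Finset.univ.erase k, (Polynomial.X - Polynomial.C (v l)) with hg
  have hdeg : ∀ k, (g k).natDegree < N := by
    intro k
    have h1 : (g k).natDegree ≤ ∑ l ∈ Finset.univ.erase k, (Polynomial.X - Polynomial.C (v l)).natDegree :=
      Polynomial.natDegree_prod_le _ _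
    have h2 : ∑ l ∈ Finset.univ.erase k, (Polynomial.X - Polynomial.C (v l)).natDegree
        = N - 1 := by
      simp [Polynomial.natDegree_X_sub_C, Finset.card_erase_of_mem]
    have hN : 0 < N := Fin.pos k
    omega
  have heval : ∀ (x : ℂ) k, (g k).eval x = ∏ l ∈ Finset.univ.erase k, (x - v l) := by
    intro x k; simp [hg, Polynomial.eval_prod]
  set Cm : Matrix (Fin N) (Fin N) ℂ := Matrix.of (fun j k => (g k).coeff j) with hCm
  have key : ∀ (w : Fin N → ℂ),
      (Matrix.of fun i k : Fin N => ∏ l ∈ Finset.univ.erase k, (w i - v l))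
        = Matrix.vandermonde w * Cm := by
    intro w
    ext i k
    simp only [Matrix.of_apply]
    rw [Matrix.mul_apply, ← heval (w i) k,
      Polynomial.eval_eq_sum_range' (hdeg k), ← Fin.sum_univ_eq_sum_range]
    simp [Matrix.vandermonde_apply, hCm, mul_comm]
  have hdiag : Matrix.vandermonde v * Cm
      = Matrix.diagonal (fun k => ∏ l ∈ Finset.univ.erase k, (v k - v l)) := by
    rw [← key v]
    ext m k
    by_cases h : m = k
    · subst h; simp [Matrix.diagonal]
    · rw [Matrix.diagonal_apply_ne _ h]
      exact Finset.prod_eq_zero (Finset.mem_erase.mpr ⟨h, Finset.mem_univ m⟩) (by simp)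
  have hVvne : Matrix.det (Matrix.vandermonde v) ≠ 0 := by
    rw [Matrix.det_vandermonde]
    refine Finset.prod_ne_zero_iff.mpr fun i _ => Finset.prod_ne_zero_iff.mpr fun j hj => ?_
    exact sub_ne_zero.mpr fun hh => (Finset.mem_Ioi.mp hj).ne' (hv hh)
  have hdetdiag : Matrix.det (Matrix.vandermonde v) * Matrix.det Cm
      = ∏ k, ∏ l ∈ Finset.univ.erase k, (v k - v l) := by
    rw [← Matrix.det_mul, hdiag, Matrix.det_diagonal]
  have hCdet : Matrix.det Cm
      = (∏ k, ∏ l ∈ Finset.univ.erase k, (v k - v l)) / Matrix.det (Matrix.vandermonde v) := by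
    field_simp
    linear_combination hdetdiag
  rw [key u, Matrix.det_mul, Matrix.det_vandermonde, hCdet, Matrix.det_vandermonde,
    offdiag_prod (fun k l => v k - v l)]
  have hsplit : (∏ i, ∏ j ∈ Finset.Ioi i, ((v i - v j) * (v j - v i)))
      = (∏ i, ∏ j ∈ Finset.Ioi i, (v i - v j)) * ∏ i, ∏ j ∈ Finset.Ioi i, (v j - v i) := by
    rw [← Finset.prod_mul_distrib]
    exact Finset.prod_congr rfl fun i _ => (Finset.prod_mul_distrib)
  have hne : (∏ i, ∏ j ∈ Finset.Ioi i, (v j - v i)) ≠ 0 := by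
    rw [← Matrix.det_vandermonde]; exact hVvne
  rw [hsplit, mul_div_cancel_right₀ _ hne]

lemma sinh_factor (a b : ℂ) :
    Complex.sinh (a - b)
      = (Complex.exp (2*a) - Complex.exp (2*b)) * (2 * Complex.exp a * Complex.exp b)⁻¹ := by
  have h1 : Complex.exp a ≠ 0 := Complex.exp_ne_zero a
  have h2 : Complex.exp b ≠ 0 := Complex.exp_ne_zero b
  rw [show Complex.sinh (a-b) = (Complex.exp (a-b) - Complex.exp (-(a-b)))/2 from rfl]
  rw [show (-(a-b)) = b - a by ring, Complex.exp_sub, Complex.exp_sub,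
    show (2:ℂ)*a = a + a by ring, show (2:ℂ)*b = b + b by ring,
    Complex.exp_add, Complex.exp_add]
  field_simp

lemma pair_id (a b c d : ℂ) :
    ((2 * Complex.exp a)⁻¹ * (2 * Complex.exp b)⁻¹)
      * (((Complex.exp d)⁻¹ * (Complex.exp c)⁻¹)
      * ((Complex.exp (2*b) - Complex.exp (2*a)) * (Complex.exp (2*c) - Complex.exp (2*d))))
      = Complex.sinh (b - a) * Complex.sinh (c - d) := by
  rw [sinh_factor b a, sinh_factor c d]
  have key : ∀ s t : ℂ, Complex.exp (2*s) - Complex.exp (2*t)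
      = Complex.exp s * Complex.exp s - Complex.exp t * Complex.exp t := by
    intro s t
    rw [show (2:ℂ)*s = s + s by ring, show (2:ℂ)*t = t + t by ring,
      Complex.exp_add, Complex.exp_add]
  rw [key b a, key c d]
  have := Complex.exp_ne_zero a
  have := Complex.exp_ne_zero b
  have := Complex.exp_ne_zero c
  have := Complex.exp_ne_zero d
  field_simp

lemma detB {N : ℕ} (x y : Fin N → ℂ)
    (hy : ∀ i j : Fin N, i ≠ j → ∀ m : ℤ, y i - y j ≠ (m : ℂ) * iπ) :
    Matrix.det (Matrix.of fun i k : Fin N =>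
        ∏ l ∈ Finset.univ.erase k, Complex.sinh (x i - y l))
      = Vand x * ∏ i, ∏ j ∈ Finset.Ioi i, Complex.sinh (y i - y j) := by
  classical
  set u : Fin N → ℂ := fun i => Complex.exp (2 * x i) with hu
  set v : Fin N → ℂ := fun k => Complex.exp (2 * y k) with hvdef
  have hv : Function.Injective v := by
    intro i j hij
    by_contra hne
    rw [hvdef] at hij
    simp only at hij
    rw [Complex.exp_eq_exp_iff_exists_int] at hij
    obtain ⟨n, hn⟩ := hij
    refine hy i j hne n ?_
    unfold iπ
    linear_combination hn / 2
  -- factor rows and columns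
  have entry : ∀ i k : Fin N,
      (∏ l ∈ Finset.univ.erase k, Complex.sinh (x i - y l))
        = ((2 * Complex.exp (x i))^(N-1))⁻¹
          * ((∏ l ∈ Finset.univ.erase k, Complex.exp (y l))⁻¹
          * (∏ l ∈ Finset.univ.erase k, (u i - v l))) := by
    intro i k
    have : ∀ l : Fin N, Complex.sinh (x i - y l)
        = (u i - v l) * ((2 * Complex.exp (x i))⁻¹ * (Complex.exp (y l))⁻¹) := by
      intro l
      rw [sinh_factor (x i) (y l), hu, hvdef]
      simp only [mul_inv]
    rw [Finset.prod_congr rfl (fun l _ => this l), Finset.prod_mul_distrib,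
      Finset.prod_mul_distrib, Finset.prod_const, Finset.prod_inv_distrib,
      Finset.card_erase_of_mem (Finset.mem_univ k), Finset.card_univ, Fintype.card_fin,
      inv_pow]
    ring
  have hdet : Matrix.det (Matrix.of fun i k : Fin N =>
        ∏ l ∈ Finset.univ.erase k, Complex.sinh (x i - y l))
      = (∏ i, ((2 * Complex.exp (x i))^(N-1))⁻¹)
        * ((∏ k, (∏ l ∈ Finset.univ.erase k, Complex.exp (y l))⁻¹)
        * (((∏ i, ∏ j ∈ Finset.Ioi i, (u j - u i)) * ∏ i, ∏ j ∈ Finset.Ioi i, (v i - v j)))) := by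
    calc Matrix.det (Matrix.of fun i k : Fin N =>
          ∏ l ∈ Finset.univ.erase k, Complex.sinh (x i - y l))
        = Matrix.det (Matrix.of fun i k : Fin N =>
            ((2 * Complex.exp (x i))^(N-1))⁻¹
            * (Matrix.of (fun i k : Fin N => (∏ l ∈ Finset.univ.erase k, Complex.exp (y l))⁻¹
                * (Matrix.of (fun i k : Fin N => ∏ l ∈ Finset.univ.erase k, (u i - v l)) i k)) i k)) := by
          congr 1; ext i k; simp only [Matrix.of_apply]; rw [entry i k]
      _ = _ := by
          rw [Matrix.det_mul_column, Matrix.det_mul_row, detA u v hv]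
  rw [hdet]
  -- now rewrite the scalar products as pair products
  have e1 : (∏ i, ((2 * Complex.exp (x i))^(N-1))⁻¹)
      = ∏ i, ∏ j ∈ Finset.Ioi i, ((2 * Complex.exp (x i))⁻¹ * (2 * Complex.exp (x j))⁻¹) := by
    rw [← offdiag_prod (fun k _ => (2 * Complex.exp (x k))⁻¹)]
    refine Finset.prod_congr rfl fun i _ => ?_
    rw [Finset.prod_const, Finset.card_erase_of_mem (Finset.mem_univ i), Finset.card_univ,
      Fintype.card_fin, inv_pow]
  have e2 : (∏ k, (∏ l ∈ Finset.univ.erase k, Complex.exp (y l))⁻¹)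
      = ∏ i, ∏ j ∈ Finset.Ioi i, ((Complex.exp (y j))⁻¹ * (Complex.exp (y i))⁻¹) := by
    rw [← offdiag_prod (fun _ l => (Complex.exp (y l))⁻¹)]
    exact Finset.prod_congr rfl fun k _ => by rw [Finset.prod_inv_distrib]
  rw [e1, e2, Vand]
  rw [← Finset.prod_mul_distrib, ← Finset.prod_mul_distrib, ← Finset.prod_mul_distrib,
    ← Finset.prod_mul_distrib]
  refine Finset.prod_congr rfl fun i _ => ?_
  rw [← Finset.prod_mul_distrib, ← Finset.prod_mul_distrib, ← Finset.prod_mul_distrib,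
    ← Finset.prod_mul_distrib]
  refine Finset.prod_congr rfl fun j _ => ?_
  exact pair_id (x i) (x j) (y i) (y j)

lemma sinh_half (z : ℂ) :
    Complex.sinh z = 2 * Complex.sinh (z/2) * Complex.cosh (z/2) := by
  have := Complex.sinh_two_mul (z/2)
  rw [show 2 * (z/2) = z by ring] at this
  exact this

lemma sinh_shift (z : ℂ) :
    Complex.sinh (z + ((Real.pi : ℂ) * Complex.I)/2) = Complex.I * Complex.cosh z := by
  rw [Complex.sinh_add,
    show ((Real.pi : ℂ) * Complex.I)/2 = ((Real.pi/2 : ℝ) : ℂ) * Complex.I by push_cast; ring,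
    Complex.cosh_mul_I, Complex.sinh_mul_I, ← Complex.ofReal_cos, ← Complex.ofReal_sin,
    Real.cos_pi_div_two, Real.sin_pi_div_two]
  simp [mul_comm]

lemma F1 {N : ℕ} (p : Fin N → ℂ) (w : ℂ) :
    (∏ l, Complex.sinh (w - p l))
      = 2^N * trigPoly p w * ∏ l, Complex.cosh ((w - p l)/2) := by
  rw [trigPoly,
    show (2:ℂ)^N * (∏ j, Complex.sinh ((w - p j)/2)) * ∏ l, Complex.cosh ((w - p l)/2)
        = ∏ l, (2 * Complex.sinh ((w - p l)/2) * Complex.cosh ((w - p l)/2)) by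
      rw [Finset.prod_mul_distrib, Finset.prod_mul_distrib, Finset.prod_const,
        Finset.card_univ, Fintype.card_fin]]
  exact Finset.prod_congr rfl fun l _ => sinh_half (w - p l)

lemma F2 {N : ℕ} (p : Fin N → ℂ) (w : ℂ) :
    trigPoly p (w + iπ) = Complex.I^N * ∏ l, Complex.cosh ((w - p l)/2) := by
  rw [trigPoly,
    show Complex.I^N = ∏ _l : Fin N, Complex.I by
      rw [Finset.prod_const, Finset.card_univ, Fintype.card_fin],
    ← Finset.prod_mul_distrib]
  refine Finset.prod_congr rfl fun l _ => ?_
  rw [show (w + iπ - p l)/2 = (w - p l)/2 + ((Real.pi : ℂ) * Complex.I)/2 by rw [iπ]; ring,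
    sinh_shift]

lemma detCauchyInv {N : ℕ} (x y : Fin N → ℂ)
    (hxy : ∀ i k, Complex.sinh (x i - y k) ≠ 0)
    (hy : ∀ i j : Fin N, i ≠ j → ∀ m : ℤ, y i - y j ≠ (m : ℂ) * iπ) :
    Matrix.det (Matrix.of fun i k : Fin N => 1 / Complex.sinh (x i - y k))
      = (∏ i, (∏ l, Complex.sinh (x i - y l))⁻¹)
        * (Vand x * ∏ i, ∏ j ∈ Finset.Ioi i, Complex.sinh (y i - y j)) := by
  classical
  have entry : ∀ i k : Fin N, 1 / Complex.sinh (x i - y k)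
      = (∏ l, Complex.sinh (x i - y l))⁻¹
        * ∏ l ∈ Finset.univ.erase k, Complex.sinh (x i - y l) := by
    intro i k
    have hne : (∏ l ∈ Finset.univ.erase k, Complex.sinh (x i - y l)) ≠ 0 :=
      Finset.prod_ne_zero_iff.mpr fun l _ => hxy i l
    rw [← Finset.mul_prod_erase Finset.univ _ (Finset.mem_univ k), mul_inv, mul_assoc,
      inv_mul_cancel₀ hne, mul_one, one_div]
  calc Matrix.det (Matrix.of fun i k : Fin N => 1 / Complex.sinh (x i - y k))
      = Matrix.det (Matrix.of fun i k : Fin N =>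
          (∏ l, Complex.sinh (x i - y l))⁻¹
          * (Matrix.of (fun i k : Fin N =>
              ∏ l ∈ Finset.univ.erase k, Complex.sinh (x i - y l)) i k)) := by
        congr 1; ext i k; simp only [Matrix.of_apply]; exact entry i k
    _ = _ := by rw [Matrix.det_mul_column, detB x y hy]

lemma per_i {N : ℕ} (p : Fin N → ℂ) (Q : ℂ → ℂ) (α η u : ℂ)
    (hQw : Q (u - η) ≠ 0)
    (hsp : ∀ l, Complex.sinh (u - p l) ≠ 0)
    (hsp' : ∀ l, Complex.sinh (u - η - p l) ≠ 0) :
    α * trigPoly p u * Q u / (trigPoly p (u - η) * Q (u - η))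
        * (∏ l, Complex.sinh (u - p l))⁻¹
      = α * (trigPoly p (u - η + iπ) * Q u / (trigPoly p (u + iπ) * Q (u - η)))
        * (∏ l, Complex.sinh (u - η - p l))⁻¹ := by
  have hprodu : (∏ l, Complex.sinh (u - p l)) ≠ 0 :=
    Finset.prod_ne_zero_iff.mpr fun l _ => hsp l
  have hprodw : (∏ l, Complex.sinh (u - η - p l)) ≠ 0 :=
    Finset.prod_ne_zero_iff.mpr fun l _ => hsp' l
  have hF1u := F1 p u
  have hF1w := F1 p (u - η)
  have hF2u := F2 p u
  have hF2w := F2 p (u - η)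
  have hu' := hprodu
  rw [hF1u] at hu'
  have hw' := hprodw
  rw [hF1w] at hw'
  obtain ⟨h2P, hKu⟩ := mul_ne_zero_iff.mp hu'
  obtain ⟨-, hPu⟩ := mul_ne_zero_iff.mp h2P
  obtain ⟨h2Pw, hKw⟩ := mul_ne_zero_iff.mp hw'
  obtain ⟨-, hPw⟩ := mul_ne_zero_iff.mp h2Pw
  have hI : (Complex.I)^N ≠ 0 := pow_ne_zero _ Complex.I_ne_zero
  have h2 : ((2:ℂ))^N ≠ 0 := pow_ne_zero _ two_ne_zero
  rw [hF1u, hF1w, hF2u, hF2w]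
  field_simp

def finsetEquiv (N : ℕ) : (Fin N → Fin 2) ≃ Finset (Fin N) where
  toFun h := Finset.univ.filter (fun i => h i = 1)
  invFun s := fun i => if i ∈ s then 1 else 0
  left_inv h := by
    have h01 : ∀ z : Fin 2, z ≠ 1 → z = 0 := by decide
    funext i
    by_cases hi : h i = 1
    · simp [hi]
    · simp [hi, h01 _ hi]
  right_inv s := by
    ext i
    by_cases hi : i ∈ s <;> simp [hi]

/-- The scalar product admits the generalized Izergin determinant
representation. -/
theorem scalar_product_izergin (N : ℕ) (hN : 1 ≤ N) (η : ℂ) (ξ p q : Fin N → ℂ) (α : ℂ)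
    (P Q ftil : ℂ → ℂ)
    (hP : P = trigPoly p) (hQ : Q = trigPoly q)
    (hftil : ftil = fun u => P (u - η + iπ) * Q u / (P (u + iπ) * Q (u - η)))
    (hV : Vand ξ ≠ 0)
    (hPQξ : ∀ n, P (ξ n - η) * Q (ξ n - η) ≠ 0)
    (hξξ : ∀ i j, i ≠ j → ∀ m : ℤ, ξ i - ξ j ≠ (m : ℂ) * iπ)
    (hpp : ∀ i j, i ≠ j → ∀ m : ℤ, p i - p j ≠ (m : ℂ) * iπ)
    (hξp : ∀ i k, ∀ m : ℤ, ξ i - p k ≠ (m : ℂ) * iπ)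
    (hξpη : ∀ i k, ∀ m : ℤ, ξ i - p k - η ≠ (m : ℂ) * iπ) :
    SP η ξ P Q α =
      Matrix.det (Matrix.of (fun i k : Fin N =>
          1 / Complex.sinh (ξ i - p k) + α * ftil (ξ i) / Complex.sinh (ξ i - p k - η))) /
        Matrix.det (Matrix.of (fun i k : Fin N => 1 / Complex.sinh (ξ i - p k))) := by
  classical
  subst hftil
  -- basic nonvanishing
  have hsξp : ∀ i k, Complex.sinh (ξ i - p k) ≠ 0 := fun i k => sinh_ne_zero_of (hξp i k)
  have hsξpη : ∀ i k, Complex.sinh (ξ i - η - p k) ≠ 0 := by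
    intro i k
    apply sinh_ne_zero_of
    intro m hm
    exact hξpη i k m (by linear_combination hm)
  set W : ℂ := ∏ i, ∏ j ∈ Finset.Ioi i, Complex.sinh (p i - p j) with hWdef
  have hWne : W ≠ 0 := by
    rw [hWdef]
    refine Finset.prod_ne_zero_iff.mpr fun i _ => Finset.prod_ne_zero_iff.mpr fun j hj => ?_
    exact sinh_ne_zero_of (hpp i j (Finset.mem_Ioi.mp hj).ne)
  -- denominator
  have hden : Matrix.det (Matrix.of fun i k : Fin N => 1 / Complex.sinh (ξ i - p k))
      = (∏ i, (∏ l, Complex.sinh (ξ i - p l))⁻¹) * (Vand ξ * W) :=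
    detCauchyInv ξ p hsξp hpp
  have hRne : (∏ i, (∏ l, Complex.sinh (ξ i - p l))⁻¹) ≠ 0 :=
    Finset.prod_ne_zero_iff.mpr fun i _ =>
      inv_ne_zero (Finset.prod_ne_zero_iff.mpr fun l _ => hsξp i l)
  have hdenne : Matrix.det (Matrix.of fun i k : Fin N => 1 / Complex.sinh (ξ i - p k)) ≠ 0 := by
    rw [hden]; exact mul_ne_zero hRne (mul_ne_zero hV hWne)
  rw [eq_div_iff hdenne]
  -- numerator: multilinear expansion over rows
  set RA : Fin N → (Fin N → ℂ) := fun i k => 1 / Complex.sinh (ξ i - p k) with hRA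
  set RB : Fin N → (Fin N → ℂ) :=
    fun i k => α * ((fun u => P (u - η + iπ) * Q u / (P (u + iπ) * Q (u - η))) (ξ i))
      / Complex.sinh (ξ i - p k - η) with hRB
  have hmat : (Matrix.of (fun i k : Fin N =>
      1 / Complex.sinh (ξ i - p k)
        + α * ((fun u => P (u - η + iπ) * Q u / (P (u + iπ) * Q (u - η))) (ξ i))
          / Complex.sinh (ξ i - p k - η))) = RA + RB := rfl
  have expand : Matrix.det (RA + RB)
      = ∑ s : Finset (Fin N), Matrix.det (s.piecewise RA RB) :=
    Matrix.detRowAlternating.toMultilinearMap.map_add_univ RA RB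
  rw [hmat, expand, SP, Finset.sum_mul]
  refine Fintype.sum_equiv (finsetEquiv N) _ _ fun h => ?_
  set s : Finset (Fin N) := finsetEquiv N h with hs
  have hmem : ∀ i, i ∈ s ↔ h i = 1 := by
    intro i; rw [hs]; simp [finsetEquiv]
  set xh : Fin N → ℂ := fun n => ξ n - ((1 - (h n : ℕ) : ℕ) : ℂ) * η with hxh
  set d : Fin N → ℂ :=
    fun i => if h i = 1 then 1
      else α * (P (ξ i - η + iπ) * Q (ξ i) / (P (ξ i + iπ) * Q (ξ i - η))) with hd
  have h01 : ∀ z : Fin 2, z ≠ 1 → z = 0 := by decide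
  have hxh1 : ∀ i, h i = 1 → xh i = ξ i := by
    intro i hi; rw [hxh]; simp [hi]
  have hxh0 : ∀ i, h i = 0 → xh i = ξ i - η := by
    intro i hi; rw [hxh]; simp [hi]
  -- rewrite piecewise matrix
  have hpw : s.piecewise RA RB
      = Matrix.of (fun i k : Fin N => d i * (1 / Complex.sinh (xh i - p k))) := by
    funext i
    by_cases hi : h i = 1
    · rw [Finset.piecewise_eq_of_mem _ _ _ ((hmem i).mpr hi)]
      funext k
      simp only [Matrix.of_apply, hd, if_pos hi, one_mul, hxh1 i hi, hRA]
    · rw [Finset.piecewise_eq_of_notMem _ _ _ (fun hmm => hi ((hmem i).mp hmm))]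
      funext k
      have hi0 : h i = 0 := h01 _ hi
      simp only [Matrix.of_apply, hd, if_neg hi, hxh0 i hi0, hRB]
      rw [mul_one_div, show ξ i - p k - η = ξ i - η - p k by ring]
  have hsxh : ∀ i k, Complex.sinh (xh i - p k) ≠ 0 := by
    intro i k
    by_cases hi : h i = 1
    · rw [hxh1 i hi]; exact hsξp i k
    · rw [hxh0 i (h01 _ hi)]; exact hsξpη i k
  rw [hpw,
    show Matrix.of (fun i k : Fin N => d i * (1 / Complex.sinh (xh i - p k)))
        = Matrix.of (fun i k : Fin N => d i
            * (Matrix.of (fun i k : Fin N => 1 / Complex.sinh (xh i - p k)) i k)) from rfl,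
    Matrix.det_mul_column, detCauchyInv xh p hsxh hpp, hden]
  -- key scalar identity
  have key : (∏ n, (α * P (ξ n) * Q (ξ n) / (P (ξ n - η) * Q (ξ n - η))) ^ (1 - (h n : ℕ)))
      * (∏ i, (∏ l, Complex.sinh (ξ i - p l))⁻¹)
      = (∏ i, d i) * ∏ i, (∏ l, Complex.sinh (xh i - p l))⁻¹ := by
    rw [← Finset.prod_mul_distrib, ← Finset.prod_mul_distrib]
    refine Finset.prod_congr rfl fun i _ => ?_
    by_cases hi : h i = 1
    · rw [hxh1 i hi, hd]
      simp [hi]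
    · have hi0 : h i = 0 := h01 _ hi
      rw [hxh0 i hi0, hd]
      simp only [if_neg hi, hi0]
      norm_num
      subst hP hQ
      have hQw : trigPoly q (ξ i - η) ≠ 0 := (mul_ne_zero_iff.mp (hPQξ i)).2
      exact per_i p (trigPoly q) α η (ξ i) hQw (fun l => hsξp i l) (fun l => hsξpη i l)
  have hstep : ∀ A R : ℂ,
      A * Vand xh / Vand ξ * (R * (Vand ξ * W)) = A * R * (Vand xh * W) := by
    intro A R
    field_simp
  rw [hstep, key]
  ring

end
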